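/- Let Λ be the Dirichlet-to-Neumann map of the lattice Kirchhoff matrix K with positive conductivities γ1,…,γ12 and interior block C. Then the (1,5) entry of Λ satisfies Λ(1,5) = -( γ1·γ2·γ11·γ6·(γ8+γ4+γ9+γ5) + γ1·γ8·γ5·γ6·(γ2+γ3+γ10+γ11) ) / det C. -/

import Mathlib

open Matrix

/-- The endpoints of the 12 edges of the lattice network (0-based: vertex `v` of the
paper is `v - 1`, edge conductivity `γₖ` of the paper is `γ (k-1)`).  The edges are
{1,9}γ₁, {9,12}γ₂, {6,12}γ₃, {2,10}γ₄, {10,11}γ₅, {5,11}γ₆, {8,9}γ₇, {9,10}γ₈,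
{3,10}γ₉, {7,12}γ₁₀, {11,12}γ₁₁, {4,11}γ₁₂. -/
def edgeEnds : Fin 12 → Fin 12 × Fin 12 :=
  ![(0, 8), (8, 11), (5, 11), (1, 9), (9, 10), (4, 10),
    (7, 8), (8, 9), (2, 9), (6, 11), (10, 11), (3, 10)]

/-- The conductivity between vertices `i` and `j`: `γ e` if some edge `e` joins `i`
and `j`, and `0` otherwise. -/
def condWt (γ : Fin 12 → ℝ) (i j : Fin 12) : ℝ :=
  ∑ e : Fin 12, if edgeEnds e = (i, j) ∨ edgeEnds e = (j, i) then γ e else 0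

/-- The Kirchhoff matrix of the lattice network: `K i j = -γᵢⱼ` off the diagonal and
`K i i = ∑ⱼ γᵢⱼ` on the diagonal. -/
def kirchhoff (γ : Fin 12 → ℝ) : Matrix (Fin 12) (Fin 12) ℝ :=
  Matrix.of fun i j => if i = j then ∑ k : Fin 12, condWt γ i k else -condWt γ i j

/-- The boundary vertices (paper's vertices 1–8) as indices of `Fin 12`. -/
def bdV : Fin 8 → Fin 12 := Fin.castLE (by norm_num)

/-- The interior vertices (paper's vertices 9–12) as indices of `Fin 12`. -/
def intV : Fin 4 → Fin 12 := fun i => i.addNat 8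

/-- The boundary-boundary block `A` of the Kirchhoff matrix. -/
def blockA (γ : Fin 12 → ℝ) : Matrix (Fin 8) (Fin 8) ℝ := (kirchhoff γ).submatrix bdV bdV

/-- The boundary-interior block `B` of the Kirchhoff matrix. -/
def blockB (γ : Fin 12 → ℝ) : Matrix (Fin 8) (Fin 4) ℝ := (kirchhoff γ).submatrix bdV intV

/-- The interior-interior block `C` of the Kirchhoff matrix. -/
def blockC (γ : Fin 12 → ℝ) : Matrix (Fin 4) (Fin 4) ℝ := (kirchhoff γ).submatrix intV intV

/-- The Dirichlet-to-Neumann map `Λ = A - B C⁻¹ Bᵀ` of the lattice network. -/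
noncomputable def dtn (γ : Fin 12 → ℝ) : Matrix (Fin 8) (Fin 8) ℝ :=
  blockA γ - blockB γ * (blockC γ)⁻¹ * (blockB γ)ᵀ

lemma sum12 (f : Fin 12 → ℝ) : ∑ i, f i =
    f 0 + (f 1 + (f 2 + (f 3 + (f 4 + (f 5 + (f 6 + (f 7 + (f 8 + (f 9 + (f 10 + f 11)))))))))) := by
  simp [Fin.sum_univ_succ]

set_option maxHeartbeats 2000000 in
lemma blockC_eq (γ : Fin 12 → ℝ) :
    blockC γ = !![γ 0 + γ 1 + γ 6 + γ 7, -γ 7, 0, -γ 1;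
                  -γ 7, γ 3 + γ 4 + γ 7 + γ 8, -γ 4, 0;
                  0, -γ 4, γ 4 + γ 5 + γ 10 + γ 11, -γ 10;
                  -γ 1, 0, -γ 10, γ 1 + γ 2 + γ 9 + γ 10] := by
  ext i j
  fin_cases i <;> fin_cases j <;>
  · simp (config := { decide := true }) [blockC, kirchhoff, condWt, sum12, edgeEnds, intV]
    try ring

set_option maxHeartbeats 1000000 in
lemma blockA_04 (γ : Fin 12 → ℝ) : blockA γ 0 4 = 0 := by
  simp (config := { decide := true }) [blockA, kirchhoff, condWt, sum12, edgeEnds, bdV]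

set_option maxHeartbeats 1000000 in
lemma blockB_row0 (γ : Fin 12 → ℝ) :
    blockB γ 0 0 = -γ 0 ∧ blockB γ 0 1 = 0 ∧ blockB γ 0 2 = 0 ∧ blockB γ 0 3 = 0 := by
  refine ⟨?_, ?_, ?_, ?_⟩ <;>
  · simp (config := { decide := true }) [blockB, kirchhoff, condWt, sum12, edgeEnds, bdV, intV]

set_option maxHeartbeats 1000000 in
lemma blockB_row4 (γ : Fin 12 → ℝ) :
    blockB γ 4 0 = 0 ∧ blockB γ 4 1 = 0 ∧ blockB γ 4 2 = -γ 5 ∧ blockB γ 4 3 = 0 := by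
  refine ⟨?_, ?_, ?_, ?_⟩ <;>
  · simp (config := { decide := true }) [blockB, kirchhoff, condWt, sum12, edgeEnds, bdV, intV]


set_option maxRecDepth 100000 in
set_option maxHeartbeats 2000000 in
lemma det_blockC (γ : Fin 12 → ℝ) : (blockC γ).det =
      γ 7 * γ 8 * γ 10 * γ 11 +
      γ 7 * γ 8 * γ 9 * γ 11 +
      γ 7 * γ 8 * γ 9 * γ 10 +
      γ 6 * γ 8 * γ 10 * γ 11 +
      γ 6 * γ 8 * γ 9 * γ 11 +
      γ 6 * γ 8 * γ 9 * γ 10 +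
      γ 6 * γ 7 * γ 10 * γ 11 +
      γ 6 * γ 7 * γ 9 * γ 11 +
      γ 6 * γ 7 * γ 9 * γ 10 +
      γ 5 * γ 7 * γ 8 * γ 10 +
      γ 5 * γ 7 * γ 8 * γ 9 +
      γ 5 * γ 6 * γ 8 * γ 10 +
      γ 5 * γ 6 * γ 8 * γ 9 +
      γ 5 * γ 6 * γ 7 * γ 10 +
      γ 5 * γ 6 * γ 7 * γ 9 +
      γ 4 * γ 7 * γ 10 * γ 11 +
      γ 4 * γ 7 * γ 9 * γ 11 +
      γ 4 * γ 7 * γ 9 * γ 10 +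
      γ 4 * γ 7 * γ 8 * γ 10 +
      γ 4 * γ 7 * γ 8 * γ 9 +
      γ 4 * γ 6 * γ 10 * γ 11 +
      γ 4 * γ 6 * γ 9 * γ 11 +
      γ 4 * γ 6 * γ 9 * γ 10 +
      γ 4 * γ 6 * γ 8 * γ 10 +
      γ 4 * γ 6 * γ 8 * γ 9 +
      γ 4 * γ 6 * γ 7 * γ 10 +
      γ 4 * γ 6 * γ 7 * γ 9 +
      γ 4 * γ 5 * γ 7 * γ 10 +
      γ 4 * γ 5 * γ 7 * γ 9 +
      γ 4 * γ 5 * γ 6 * γ 10 +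
      γ 4 * γ 5 * γ 6 * γ 9 +
      γ 3 * γ 7 * γ 10 * γ 11 +
      γ 3 * γ 7 * γ 9 * γ 11 +
      γ 3 * γ 7 * γ 9 * γ 10 +
      γ 3 * γ 6 * γ 10 * γ 11 +
      γ 3 * γ 6 * γ 9 * γ 11 +
      γ 3 * γ 6 * γ 9 * γ 10 +
      γ 3 * γ 5 * γ 7 * γ 10 +
      γ 3 * γ 5 * γ 7 * γ 9 +
      γ 3 * γ 5 * γ 6 * γ 10 +
      γ 3 * γ 5 * γ 6 * γ 9 +
      γ 3 * γ 4 * γ 7 * γ 10 +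
      γ 3 * γ 4 * γ 7 * γ 9 +
      γ 3 * γ 4 * γ 6 * γ 10 +
      γ 3 * γ 4 * γ 6 * γ 9 +
      γ 2 * γ 7 * γ 8 * γ 11 +
      γ 2 * γ 7 * γ 8 * γ 10 +
      γ 2 * γ 6 * γ 8 * γ 11 +
      γ 2 * γ 6 * γ 8 * γ 10 +
      γ 2 * γ 6 * γ 7 * γ 11 +
      γ 2 * γ 6 * γ 7 * γ 10 +
      γ 2 * γ 5 * γ 7 * γ 8 +
      γ 2 * γ 5 * γ 6 * γ 8 +
      γ 2 * γ 5 * γ 6 * γ 7 +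
      γ 2 * γ 4 * γ 7 * γ 11 +
      γ 2 * γ 4 * γ 7 * γ 10 +
      γ 2 * γ 4 * γ 7 * γ 8 +
      γ 2 * γ 4 * γ 6 * γ 11 +
      γ 2 * γ 4 * γ 6 * γ 10 +
      γ 2 * γ 4 * γ 6 * γ 8 +
      γ 2 * γ 4 * γ 6 * γ 7 +
      γ 2 * γ 4 * γ 5 * γ 7 +
      γ 2 * γ 4 * γ 5 * γ 6 +
      γ 2 * γ 3 * γ 7 * γ 11 +
      γ 2 * γ 3 * γ 7 * γ 10 +
      γ 2 * γ 3 * γ 6 * γ 11 +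
      γ 2 * γ 3 * γ 6 * γ 10 +
      γ 2 * γ 3 * γ 5 * γ 7 +
      γ 2 * γ 3 * γ 5 * γ 6 +
      γ 2 * γ 3 * γ 4 * γ 7 +
      γ 2 * γ 3 * γ 4 * γ 6 +
      γ 1 * γ 8 * γ 10 * γ 11 +
      γ 1 * γ 8 * γ 9 * γ 11 +
      γ 1 * γ 8 * γ 9 * γ 10 +
      γ 1 * γ 7 * γ 10 * γ 11 +
      γ 1 * γ 7 * γ 9 * γ 11 +
      γ 1 * γ 7 * γ 9 * γ 10 +
      γ 1 * γ 7 * γ 8 * γ 11 +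
      γ 1 * γ 7 * γ 8 * γ 10 +
      γ 1 * γ 6 * γ 8 * γ 11 +
      γ 1 * γ 6 * γ 8 * γ 10 +
      γ 1 * γ 6 * γ 7 * γ 11 +
      γ 1 * γ 6 * γ 7 * γ 10 +
      γ 1 * γ 5 * γ 8 * γ 10 +
      γ 1 * γ 5 * γ 8 * γ 9 +
      γ 1 * γ 5 * γ 7 * γ 10 +
      γ 1 * γ 5 * γ 7 * γ 9 +
      γ 1 * γ 5 * γ 7 * γ 8 +
      γ 1 * γ 5 * γ 6 * γ 8 +
      γ 1 * γ 5 * γ 6 * γ 7 +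
      γ 1 * γ 4 * γ 10 * γ 11 +
      γ 1 * γ 4 * γ 9 * γ 11 +
      γ 1 * γ 4 * γ 9 * γ 10 +
      γ 1 * γ 4 * γ 8 * γ 10 +
      γ 1 * γ 4 * γ 8 * γ 9 +
      γ 1 * γ 4 * γ 7 * γ 11 +
      γ 1 * γ 4 * γ 7 * γ 9 +
      γ 1 * γ 4 * γ 7 * γ 8 +
      γ 1 * γ 4 * γ 6 * γ 11 +
      γ 1 * γ 4 * γ 6 * γ 10 +
      γ 1 * γ 4 * γ 6 * γ 8 +
      γ 1 * γ 4 * γ 6 * γ 7 +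
      γ 1 * γ 4 * γ 5 * γ 10 +
      γ 1 * γ 4 * γ 5 * γ 9 +
      γ 1 * γ 4 * γ 5 * γ 7 +
      γ 1 * γ 4 * γ 5 * γ 6 +
      γ 1 * γ 3 * γ 10 * γ 11 +
      γ 1 * γ 3 * γ 9 * γ 11 +
      γ 1 * γ 3 * γ 9 * γ 10 +
      γ 1 * γ 3 * γ 7 * γ 11 +
      γ 1 * γ 3 * γ 7 * γ 10 +
      γ 1 * γ 3 * γ 6 * γ 11 +
      γ 1 * γ 3 * γ 6 * γ 10 +
      γ 1 * γ 3 * γ 5 * γ 10 +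
      γ 1 * γ 3 * γ 5 * γ 9 +
      γ 1 * γ 3 * γ 5 * γ 7 +
      γ 1 * γ 3 * γ 5 * γ 6 +
      γ 1 * γ 3 * γ 4 * γ 10 +
      γ 1 * γ 3 * γ 4 * γ 9 +
      γ 1 * γ 3 * γ 4 * γ 7 +
      γ 1 * γ 3 * γ 4 * γ 6 +
      γ 1 * γ 2 * γ 8 * γ 11 +
      γ 1 * γ 2 * γ 8 * γ 10 +
      γ 1 * γ 2 * γ 7 * γ 11 +
      γ 1 * γ 2 * γ 7 * γ 10 +
      γ 1 * γ 2 * γ 5 * γ 8 +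
      γ 1 * γ 2 * γ 5 * γ 7 +
      γ 1 * γ 2 * γ 4 * γ 11 +
      γ 1 * γ 2 * γ 4 * γ 10 +
      γ 1 * γ 2 * γ 4 * γ 8 +
      γ 1 * γ 2 * γ 4 * γ 7 +
      γ 1 * γ 2 * γ 4 * γ 5 +
      γ 1 * γ 2 * γ 3 * γ 11 +
      γ 1 * γ 2 * γ 3 * γ 10 +
      γ 1 * γ 2 * γ 3 * γ 5 +
      γ 1 * γ 2 * γ 3 * γ 4 +
      γ 0 * γ 8 * γ 10 * γ 11 +
      γ 0 * γ 8 * γ 9 * γ 11 +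
      γ 0 * γ 8 * γ 9 * γ 10 +
      γ 0 * γ 7 * γ 10 * γ 11 +
      γ 0 * γ 7 * γ 9 * γ 11 +
      γ 0 * γ 7 * γ 9 * γ 10 +
      γ 0 * γ 5 * γ 8 * γ 10 +
      γ 0 * γ 5 * γ 8 * γ 9 +
      γ 0 * γ 5 * γ 7 * γ 10 +
      γ 0 * γ 5 * γ 7 * γ 9 +
      γ 0 * γ 4 * γ 10 * γ 11 +
      γ 0 * γ 4 * γ 9 * γ 11 +
      γ 0 * γ 4 * γ 9 * γ 10 +
      γ 0 * γ 4 * γ 8 * γ 10 +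
      γ 0 * γ 4 * γ 8 * γ 9 +
      γ 0 * γ 4 * γ 7 * γ 10 +
      γ 0 * γ 4 * γ 7 * γ 9 +
      γ 0 * γ 4 * γ 5 * γ 10 +
      γ 0 * γ 4 * γ 5 * γ 9 +
      γ 0 * γ 3 * γ 10 * γ 11 +
      γ 0 * γ 3 * γ 9 * γ 11 +
      γ 0 * γ 3 * γ 9 * γ 10 +
      γ 0 * γ 3 * γ 5 * γ 10 +
      γ 0 * γ 3 * γ 5 * γ 9 +
      γ 0 * γ 3 * γ 4 * γ 10 +
      γ 0 * γ 3 * γ 4 * γ 9 +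
      γ 0 * γ 2 * γ 8 * γ 11 +
      γ 0 * γ 2 * γ 8 * γ 10 +
      γ 0 * γ 2 * γ 7 * γ 11 +
      γ 0 * γ 2 * γ 7 * γ 10 +
      γ 0 * γ 2 * γ 5 * γ 8 +
      γ 0 * γ 2 * γ 5 * γ 7 +
      γ 0 * γ 2 * γ 4 * γ 11 +
      γ 0 * γ 2 * γ 4 * γ 10 +
      γ 0 * γ 2 * γ 4 * γ 8 +
      γ 0 * γ 2 * γ 4 * γ 7 +
      γ 0 * γ 2 * γ 4 * γ 5 +
      γ 0 * γ 2 * γ 3 * γ 11 +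
      γ 0 * γ 2 * γ 3 * γ 10 +
      γ 0 * γ 2 * γ 3 * γ 5 +
      γ 0 * γ 2 * γ 3 * γ 4 +
      γ 0 * γ 1 * γ 8 * γ 11 +
      γ 0 * γ 1 * γ 8 * γ 10 +
      γ 0 * γ 1 * γ 7 * γ 11 +
      γ 0 * γ 1 * γ 7 * γ 10 +
      γ 0 * γ 1 * γ 5 * γ 8 +
      γ 0 * γ 1 * γ 5 * γ 7 +
      γ 0 * γ 1 * γ 4 * γ 11 +
      γ 0 * γ 1 * γ 4 * γ 10 +
      γ 0 * γ 1 * γ 4 * γ 8 +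
      γ 0 * γ 1 * γ 4 * γ 7 +
      γ 0 * γ 1 * γ 4 * γ 5 +
      γ 0 * γ 1 * γ 3 * γ 11 +
      γ 0 * γ 1 * γ 3 * γ 10 +
      γ 0 * γ 1 * γ 3 * γ 5 +
      γ 0 * γ 1 * γ 3 * γ 4 := by
  rw [blockC_eq, Matrix.det_succ_row_zero]
  simp only [Fin.sum_univ_four, Matrix.det_fin_three, Matrix.submatrix_apply]
  have e1 : Fin.succ (0 : Fin 3) = (1 : Fin 4) := by decide
  have e2 : Fin.succ (1 : Fin 3) = (2 : Fin 4) := by decide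
  have e3 : Fin.succ (2 : Fin 3) = (3 : Fin 4) := by decide
  have a00 : Fin.succAbove (0 : Fin 4) (0 : Fin 3) = 1 := by decide
  have a01 : Fin.succAbove (0 : Fin 4) (1 : Fin 3) = 2 := by decide
  have a02 : Fin.succAbove (0 : Fin 4) (2 : Fin 3) = 3 := by decide
  have a10 : Fin.succAbove (1 : Fin 4) (0 : Fin 3) = 0 := by decide
  have a11 : Fin.succAbove (1 : Fin 4) (1 : Fin 3) = 2 := by decide
  have a12 : Fin.succAbove (1 : Fin 4) (2 : Fin 3) = 3 := by decide
  have a20 : Fin.succAbove (2 : Fin 4) (0 : Fin 3) = 0 := by decide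
  have a21 : Fin.succAbove (2 : Fin 4) (1 : Fin 3) = 1 := by decide
  have a22 : Fin.succAbove (2 : Fin 4) (2 : Fin 3) = 3 := by decide
  have a30 : Fin.succAbove (3 : Fin 4) (0 : Fin 3) = 0 := by decide
  have a31 : Fin.succAbove (3 : Fin 4) (1 : Fin 3) = 1 := by decide
  have a32 : Fin.succAbove (3 : Fin 4) (2 : Fin 3) = 2 := by decide
  have v0 : ((0 : Fin 4) : ℕ) = 0 := rfl
  have v1 : ((1 : Fin 4) : ℕ) = 1 := rfl
  have v2 : ((2 : Fin 4) : ℕ) = 2 := rfl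
  have v3 : ((3 : Fin 4) : ℕ) = 3 := rfl
  simp only [e1, e2, e3, a00, a01, a02, a10, a11, a12, a20, a21, a22, a30, a31, a32, v0, v1, v2, v3,
    Matrix.of_apply, Matrix.cons_val', Matrix.cons_val_zero, Matrix.cons_val_one, Matrix.cons_val_two,
    Matrix.cons_val_three, Matrix.head_cons, Matrix.empty_val', Matrix.cons_val_fin_one,
    Matrix.tail_cons, Matrix.cons_val_succ, Matrix.vecHead, Matrix.vecTail, Function.comp_apply]
  ring

lemma det_blockC_pos (γ : Fin 12 → ℝ) (hγ : ∀ e, 0 < γ e) : 0 < (blockC γ).det := by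
  have h0 := hγ 0; have h1 := hγ 1; have h2 := hγ 2; have h3 := hγ 3
  have h4 := hγ 4; have h5 := hγ 5; have h6 := hγ 6; have h7 := hγ 7
  have h8 := hγ 8; have h9 := hγ 9; have h10 := hγ 10; have h11 := hγ 11
  rw [det_blockC]
  positivity

set_option maxHeartbeats 2000000 in
lemma adj_02 (γ : Fin 12 → ℝ) : (blockC γ).adjugate 0 2 = γ 4 * γ 7 * γ 10 + γ 4 * γ 7 * γ 9 + γ 2 * γ 4 * γ 7 + γ 1 * γ 8 * γ 10 + γ 1 * γ 7 * γ 10 + γ 1 * γ 4 * γ 10 + γ 1 * γ 4 * γ 7 + γ 1 * γ 3 * γ 10 := by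
  rw [blockC_eq, Matrix.adjugate_fin_succ_eq_det_submatrix]
  simp (config := { decide := true }) [Matrix.det_fin_three,
    Fin.succAbove, Fin.castSucc, Fin.castAdd, Fin.castLE, Fin.lt_def]
  ring


/-- the (1,5) entry of `Λ` (0-based: `Λ 0 4`) equals
`-(γ₁γ₂γ₁₁γ₆(γ₈+γ₄+γ₉+γ₅) + γ₁γ₈γ₅γ₆(γ₂+γ₃+γ₁₀+γ₁₁)) / det C`. -/
theorem dtn_entry_1_5 (γ : Fin 12 → ℝ) (hγ : ∀ e, 0 < γ e) :
    dtn γ 0 4 =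
      -(γ 0 * γ 1 * γ 10 * γ 5 * (γ 7 + γ 3 + γ 8 + γ 4) +
        γ 0 * γ 7 * γ 4 * γ 5 * (γ 1 + γ 2 + γ 9 + γ 10)) / (blockC γ).det := by
  have hdet := det_blockC_pos γ hγ
  obtain ⟨b00, b01, b02, b03⟩ := blockB_row0 γ
  obtain ⟨b40, b41, b42, b43⟩ := blockB_row4 γ
  have hinv : (blockC γ)⁻¹ 0 2 = ((blockC γ).det)⁻¹ * (blockC γ).adjugate 0 2 := by
    rw [Matrix.inv_def]; simp [Ring.inverse_eq_inv']
  rw [dtn]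
  simp only [Matrix.sub_apply, Matrix.mul_apply, Matrix.transpose_apply, Fin.sum_univ_four,
    blockA_04, b00, b01, b02, b03, b40, b41, b42, b43]
  rw [hinv, adj_02]
  field_simp
  ring
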